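/- Let H be an RKHS on X with kernel K, P₀ a probability measure with ∫ K(x,x) dP₀(x) < ∞, and let J : H → L²(P₀) be the inclusion f ↦ [f]. Let P ≪ P₀ with density dP/dP₀ = 1 + u where u ∈ L²(P₀), and suppose E_{P₀}[K(·,X)] = 0 in H. Then the mean embedding Ψ_P := ∫ K(·,x) dP(x) satisfies Ψ_P = J*u, and consequently ‖Ψ_P‖²_H = ⟨Υ u, u⟩_{L²(P₀)} = Σ_i λ_i ⟨u, φ̃_i⟩²_{L²(P₀)}, where Υ = J J* has eigenpairs (λ_i, φ̃_i). -/

import Mathlib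

open RealInnerProductSpace MeasureTheory

/-- H an RKHS on X with feature map Φ (Stein kernel K(x,y) = ⟪Φ x, Φ y⟫),
P₀ a probability measure, J : H → L²(P₀) the inclusion f ↦ [⟪f, Φ ·⟫]. If P ≪ P₀ with
dP/dP₀ = 1 + u, u ∈ L²(P₀), and E_{P₀}[Φ X] = 0 in H, then the mean embedding
Ψ_P = ∫ Φ x dP(x) satisfies Ψ_P = J* u, so ‖Ψ_P‖² = ⟨Υ u, u⟩ where Υ = J J*, and if
(λ_i, φ̃_i) is an eigensystem of Υ spanning the closure of its range, then
‖Ψ_P‖² = Σ_i λ_i ⟨u, φ̃_i⟩². -/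
theorem stmt_11 {X : Type*} [MeasurableSpace X] (P₀ : Measure X) [IsProbabilityMeasure P₀]
    {H : Type*} [NormedAddCommGroup H] [InnerProductSpace ℝ H] [CompleteSpace H]
    (Φ : X → H) (J : H →L[ℝ] Lp ℝ 2 P₀)
    (hJ : ∀ f : H, (J f : X → ℝ) =ᵐ[P₀] fun x => ⟪f, Φ x⟫)
    (u : Lp ℝ 2 P₀)
    (hpos : ∀ᵐ x ∂P₀, 0 ≤ 1 + u x)
    (P : Measure X) (hP : P = P₀.withDensity (fun x => ENNReal.ofReal (1 + u x)))
    (hint0 : Integrable Φ P₀) (hintP : Integrable Φ P)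
    (hintu : Integrable (fun x => u x • Φ x) P₀)
    (hmean0 : ∫ x, Φ x ∂P₀ = 0)
    {ι : Type*} (φt : ι → Lp ℝ 2 P₀) (hφt : Orthonormal ℝ φt)
    (l : ι → ℝ) (hl : ∀ i, 0 < l i)
    (heig : ∀ i, (J ∘L J.adjoint) (φt i) = l i • φt i)
    (hspan : ∀ v : Lp ℝ 2 P₀, (∀ i, ⟪φt i, v⟫ = 0) → (J ∘L J.adjoint) v = 0) :
    (∫ x, Φ x ∂P) = J.adjoint u ∧
    ‖∫ x, Φ x ∂P‖ ^ 2 = ⟪(J ∘L J.adjoint) u, u⟫ ∧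
    HasSum (fun i => l i * ⟪u, φt i⟫ ^ 2) (‖∫ x, Φ x ∂P‖ ^ 2) := by
  -- Step 1: ∫ Φ ∂P = ∫ (1+u) • Φ ∂P₀ = ∫ u • Φ ∂P₀
  have hu_meas : AEMeasurable (fun x => u x) P₀ := (Lp.aestronglyMeasurable u).aemeasurable
  have hmeasNN : AEMeasurable (fun x => Real.toNNReal (1 + u x)) P₀ :=
    measurable_real_toNNReal.comp_aemeasurable (aemeasurable_const.add hu_meas)
  have hPint : (∫ x, Φ x ∂P) = ∫ x, u x • Φ x ∂P₀ := by
    have h1 : (∫ x, Φ x ∂P) = ∫ x, Real.toNNReal (1 + u x) • Φ x ∂P₀ := by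
      rw [hP]
      exact integral_withDensity_eq_integral_smul₀ hmeasNN Φ
    have h2 : (fun x => Real.toNNReal (1 + u x) • Φ x)
        =ᵐ[P₀] fun x => Φ x + u x • Φ x := by
      filter_upwards [hpos] with x hx
      rw [NNReal.smul_def, Real.coe_toNNReal _ hx, add_smul, one_smul]
    rw [h1, integral_congr_ae h2, integral_add hint0 hintu, hmean0, zero_add]
  -- Step 2: J.adjoint u = ∫ u • Φ ∂P₀
  have hadj : J.adjoint u = ∫ x, u x • Φ x ∂P₀ := by
    refine ext_inner_left ℝ fun f => ?_
    rw [ContinuousLinearMap.adjoint_inner_right]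
    have hL2 : ⟪J f, u⟫ = ∫ x, (J f : X → ℝ) x * u x ∂P₀ := by
      rw [L2.inner_def]; simp [RCLike.inner_apply]
      exact integral_congr_ae (Filter.Eventually.of_forall fun x => mul_comm _ _)
    have h3 : (fun x => (J f : X → ℝ) x * u x) =ᵐ[P₀] fun x => ⟪f, u x • Φ x⟫ := by
      filter_upwards [hJ f] with x hx
      rw [hx, real_inner_smul_right]; ring
    rw [hL2, integral_congr_ae h3, integral_inner hintu]
  have hΨ : (∫ x, Φ x ∂P) = J.adjoint u := by rw [hPint, hadj]
  -- Step 3: norm squared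
  have hnorm : ‖∫ x, Φ x ∂P‖ ^ 2 = ⟪(J ∘L J.adjoint) u, u⟫ := by
    rw [hΨ, ← real_inner_self_eq_norm_sq, ContinuousLinearMap.comp_apply,
      ContinuousLinearMap.adjoint_inner_left, real_inner_comm]
  refine ⟨hΨ, hnorm, ?_⟩
  classical
  -- Step 4: HasSum
  set Υ := J ∘L J.adjoint with hΥ
  have hsummable : Summable fun i => ⟪φt i, u⟫ • φt i := by
    have := (hφt.orthogonalFamily.summable_iff_norm_sq_summable
      (fun i => (⟪φt i, u⟫ : ℝ))).2 (hφt.inner_products_summable u)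
    simpa [LinearIsometry.toSpanSingleton_apply] using this
  obtain ⟨w, hw⟩ := hsummable
  have hwin : ∀ j, ⟪φt j, w⟫ = ⟪φt j, u⟫ := by
    intro j
    have h4 : HasSum (fun i => ⟪φt i, u⟫ * ⟪φt j, φt i⟫) ⟪φt j, w⟫ := by
      simpa [innerSL_apply_apply, inner_smul_right, mul_comm] using hw.mapL (innerSL ℝ (φt j))
    have h4' : HasSum (fun i => if i = j then (⟪φt j, u⟫ : ℝ) else 0) ⟪φt j, w⟫ := by
      convert h4 using 2 with i
      rw [(orthonormal_iff_ite.mp hφt) j i]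
      rcases eq_or_ne i j with h | h
      · simp [h]
      · simp [h, Ne.symm h]
    exact h4'.unique (hasSum_ite_eq j _)
  have hv0 : Υ (u - w) = 0 := by
    refine hspan _ fun i => ?_
    rw [inner_sub_right, hwin i, sub_self]
  have hUw : HasSum (fun i => ⟪φt i, u⟫ • (l i • φt i)) (Υ w) := by
    have := hw.mapL Υ
    convert this using 2 with i
    rw [ContinuousLinearMap.map_smul, heig i]
  have hUwu : HasSum (fun i => l i * ⟪u, φt i⟫ ^ 2) ⟪u, Υ w⟫ := by
    have h6 := hUw.mapL (innerSL ℝ u)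
    convert h6 using 2 with i
    case e'_3 => rfl
    case e'_6 => rw [innerSL_apply_apply]
    rw [innerSL_apply_apply, inner_smul_right, inner_smul_right, real_inner_comm (φt i) u]
    ring
  have hUu : Υ u = Υ w := by
    have h7 : Υ u - Υ w = 0 := by rw [← map_sub, hv0]
    exact sub_eq_zero.mp h7
  rw [hnorm, hUu, real_inner_comm]
  exact hUwu
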